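/- arXiv:2109.00241 — 4 statements merged into one kernel-verified Lean document; each statement's English description precedes it below -/
import Mathlib

section
/- For all words x and y over {0,1} that each begin with 1 and end with 0, one has δ_{1::x} ≺ δ_y = δ_{1::y} ≺ δ_x in A, where 1::x denotes the word x with the letter 1 prepended. (These are the relations showing that A_{1,0} is not a free zinbiel algebra.) -/
/-- Words over the alphabet `{0,1}`, encoded with `false` = `0` and `true` = `1`. -/
abbrev Word : Type := List Bool

/-- The ℚ-vector space `A` of finitely supported functions on words over `{0,1}`. -/
abbrev A01 : Type := Word →₀ ℚ

/-- The basis element `δ_x` of `A` attached to a word `x`. -/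
noncomputable def δ (x : Word) : A01 := Finsupp.single x 1

/-- Prepend the letter `a` to every word of a formal sum. -/
noncomputable def prependLetter (a : Bool) (f : A01) : A01 :=
  Finsupp.mapDomain (List.cons a) f

/-- The shuffle product of two words, as an element of `A`. -/
noncomputable def shuffle : Word → Word → A01
  | [], y => δ y
  | a :: x, [] => δ (a :: x)
  | a :: x, b :: y =>
      prependLetter a (shuffle x (b :: y)) + prependLetter b (shuffle (a :: x) y)
  termination_by x y => x.length + y.length

/-- The half-shuffle product on basis words: `δ_{a::x} ≺ δ_y = a·(x ш y)`, `δ_[] ≺ δ_y = 0`. -/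
noncomputable def halfWord : Word → Word → A01
  | [], _ => 0
  | a :: x, y => prependLetter a (shuffle x y)

/-- The half-shuffle (zinbiel) product `≺` on `A`, extended bilinearly from basis words. -/
noncomputable def half (f g : A01) : A01 :=
  f.sum fun x c => g.sum fun y d => (c * d) • halfWord x y

/-- The right-parenthesized product `K(a_1, …, a_n) = a_1 ≺ (a_2 ≺ (⋯ ≺ a_n))`,
with `K(a_n) = a_n`, and `δ_[]` (the shuffle unit) for the empty list. -/
noncomputable def Klist : List A01 → A01
  | [] => δ []
  | [a] => a
  | a :: b :: l => half a (Klist (b :: l))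

/-- The generators `z_2 = δ_{(1,0)}` and `z_3 = u·δ_{(1,0,0)} + v·δ_{(1,1,0)}`;
letters of the alphabet `{2,3}` are encoded with `false` = `2` and `true` = `3`. -/
noncomputable def zgen (u v : ℚ) : Bool → A01
  | false => δ [true, false]
  | true => u • δ [true, false, false] + v • δ [true, true, false]

/-- `K_{u,v}(w)` for a word `w` over `{2,3}` (encoded with `false` = `2`, `true` = `3`). -/
noncomputable def Kuv (u v : ℚ) (w : List Bool) : A01 :=
  Klist (w.map (zgen u v))

/-- The block substitution `2 ↦ (1,0)`, `3 ↦ (1,0,0)`. -/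
def blocks0 (c : Bool) : Word := if c then [true, false, false] else [true, false]

/-- The block substitution `2 ↦ (1,0)`, `3 ↦ (1,1,0)`. -/
def blocks1 (c : Bool) : Word := if c then [true, true, false] else [true, false]

/-- `cat₀(w)`: substitute `2 ↦ (1,0)`, `3 ↦ (1,0,0)` and concatenate. -/
def cat0 (w : List Bool) : Word := (w.map blocks0).flatten

/-- `cat₁(w)`: substitute `2 ↦ (1,0)`, `3 ↦ (1,1,0)` and concatenate. -/
def cat1 (w : List Bool) : Word := (w.map blocks1).flatten

/-- A good-shuffle realizing the word `x` from the words `ws = (w^1, …, w^n)`: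
a partition `S` of the positions of `x`, reading `x` along `S j` gives `w^j`,
and the minima of the parts are in increasing order. -/
def GoodShuffle (ws : List Word) (x : Word)
    (S : Fin ws.length → Finset (Fin x.length)) : Prop :=
  (∀ p : Fin x.length, ∃! j, p ∈ S j) ∧
  (∀ j, ((S j).sort (· ≤ ·)).map x.get = ws.get j) ∧
  (∀ j k, j < k → (S j).min < (S k).min)

/-- The weight of a word over `{2,3}`: the sum of its letters. -/
def wt (w : List Bool) : ℕ := (w.map fun c => if c then 3 else 2).sum


theorem shuffle_comm : ∀ x y : Word, shuffle x y = shuffle y x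
  | [], [] => rfl
  | [], _ :: _ => by rw [shuffle, shuffle]
  | _ :: _, [] => by rw [shuffle, shuffle]
  | a :: x, b :: y => by
      rw [shuffle, shuffle, shuffle_comm x (b :: y), shuffle_comm (a :: x) y, add_comm]
  termination_by x y => x.length + y.length

theorem half_single (a b : Word) : half (δ a) (δ b) = halfWord a b := by
  unfold half δ
  rw [Finsupp.sum_single_index, Finsupp.sum_single_index]
  · simp
  · simp
  · simp [Finsupp.sum_single_index]

/-- For words `x, y` over `{0,1}` beginning with `1` and ending with `0`, one has
`δ_{1::x} ≺ δ_y = δ_{1::y} ≺ δ_x`: the relations showing `A_{1,0}` is not free. -/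
theorem relations_in_A10 (x y : Word)
    (hx : x.head? = some true ∧ x.getLast? = some false)
    (hy : y.head? = some true ∧ y.getLast? = some false) :
    half (δ (true :: x)) (δ y) = half (δ (true :: y)) (δ x) := by
  rw [half_single, half_single]
  show prependLetter true (shuffle x y) = prependLetter true (shuffle y x)
  rw [shuffle_comm]
end

section
/- For nonempty words w^1, …, w^n over {0,1} and any word x over {0,1}, the coefficient of δ_x in K(δ_{w^1}, …, δ_{w^n}) equals the number of good-shuffles realizing x from (w^1, …, w^n); in particular this coefficient is zero unless |x| = Σ_j |w^j|. -/
-- counting functions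
def mcount : Word → Word → Word → ℕ
  | [], v, x => if x = v then 1 else 0
  | a :: u, [], x => if x = a :: u then 1 else 0
  | _ :: _, _ :: _, [] => 0
  | a :: u, b :: v, c :: x =>
      (if c = a then mcount u (b :: v) x else 0) + (if c = b then mcount (a :: u) v x else 0)
  termination_by u v => u.length + v.length

def gcount : List Word → Word → ℕ
  | [], x => if x = [] then 1 else 0
  | [w], x => if x = w then 1 else 0
  | (a :: w') :: v :: ws, c :: x' =>
      if c = a then ∑ y ∈ x'.sublists.toFinset, mcount w' y x' * gcount (v :: ws) y else 0
  | _ :: _ :: _, _ => 0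

-- coefficient lemmas
lemma prepend_nil (a : Bool) (f : A01) : prependLetter a f [] = 0 := by
  apply Finsupp.mapDomain_notin_range
  rintro ⟨x, hx⟩; simp at hx

lemma prepend_cons (a b : Bool) (f : A01) (x : Word) :
    prependLetter a f (b :: x) = if b = a then f x else 0 := by
  by_cases h : b = a
  · subst h; simp [prependLetter, Finsupp.mapDomain_apply (List.cons_injective (a := b))]
  · simp only [h, if_false]
    apply Finsupp.mapDomain_notin_range
    rintro ⟨y, hy⟩; simp at hy; exact h hy.1.symm

lemma delta_apply (y x : Word) : δ y x = if x = y then 1 else 0 := by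
  simp [δ, Finsupp.single_apply, eq_comm]

lemma shuffle_apply : ∀ u v x, shuffle u v x = (mcount u v x : ℚ)
  | [], v, x => by rw [shuffle, mcount, delta_apply]; split <;> simp
  | a :: u, [], x => by rw [shuffle, mcount, delta_apply]; split <;> simp
  | a :: u, b :: v, [] => by
      rw [shuffle, mcount]; simp [prepend_nil]
  | a :: u, b :: v, c :: x => by
      rw [shuffle, mcount]
      have h1 := shuffle_apply u (b :: v) x
      have h2 := shuffle_apply (a :: u) v x
      simp only [Finsupp.add_apply, prepend_cons, h1, h2]
      push_cast
      split <;> split <;> simp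
  termination_by u v => u.length + v.length

lemma mcount_sublist : ∀ u v x, mcount u v x ≠ 0 → v.Sublist x
  | [], v, x => by rw [mcount]; split <;> simp_all [List.Sublist.refl]
  | a :: u, [], x => by simp
  | a :: u, b :: v, [] => by rw [mcount]; simp
  | a :: u, b :: v, c :: x => by
      rw [mcount]
      intro h
      rcases (show (if c = a then mcount u (b :: v) x else 0) ≠ 0 ∨ (if c = b then mcount (a :: u) v x else 0) ≠ 0 by omega) with h' | h'
      · have hc : c = a ∧ mcount u (b :: v) x ≠ 0 := by
          by_cases hca : c = a <;> simp_all
        exact (mcount_sublist u (b :: v) x hc.2).cons c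
      · have hc : c = b ∧ mcount (a :: u) v x ≠ 0 := by
          by_cases hcb : c = b <;> simp_all
        obtain ⟨rfl, hc2⟩ := hc
        exact (mcount_sublist (a :: u) v x hc2).cons₂ c
  termination_by u v => u.length + v.length

lemma mcount_length : ∀ u v x, mcount u v x ≠ 0 → x.length = u.length + v.length
  | [], v, x => by rw [mcount]; split <;> simp_all
  | a :: u, [], x => by rw [mcount]; split <;> simp_all
  | a :: u, b :: v, [] => by rw [mcount]; simp
  | a :: u, b :: v, c :: x => by
      rw [mcount]
      intro h
      rcases (show (if c = a then mcount u (b :: v) x else 0) ≠ 0 ∨ (if c = b then mcount (a :: u) v x else 0) ≠ 0 by omega) with h' | h'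
      · have hc : mcount u (b :: v) x ≠ 0 := by
          by_cases hca : c = a <;> simp_all
        have := mcount_length u (b :: v) x hc
        simp at this ⊢; omega
      · have hc : mcount (a :: u) v x ≠ 0 := by
          by_cases hcb : c = b <;> simp_all
        have := mcount_length (a :: u) v x hc
        simp at this ⊢; omega
  termination_by u v => u.length + v.length

-- Klist coefficient = gcount
lemma half_delta_apply (w : Word) (g : A01) (x : Word) :
    half (δ w) g x = g.sum fun y d => d * halfWord w y x := by
  rw [half, δ, Finsupp.sum_single_index]
  · rw [Finsupp.sum_apply]
    congr 1; ext y d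
    simp [Finsupp.smul_apply]
  · simp

lemma gcount_nil_cons (v : Word) (ws : List Word) (x : Word) :
    gcount ([] :: v :: ws) x = 0 := by
  cases x <;> rfl

lemma Klist_apply : ∀ ws x, Klist (ws.map δ) x = (gcount ws x : ℚ)
  | [], x => by rw [List.map, Klist, gcount, delta_apply]; split <;> simp
  | [w], x => by rw [List.map, List.map, Klist, gcount, delta_apply]; split <;> simp
  | w :: v :: ws, x => by
      have IH : ∀ y, Klist ((v :: ws).map δ) y = (gcount (v :: ws) y : ℚ) :=
        fun y => Klist_apply (v :: ws) y
      have key : Klist ((w :: v :: ws).map δ) x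
          = (Klist ((v :: ws).map δ)).sum fun y d => d * halfWord w y x := by
        rw [List.map_cons, List.map_cons, Klist]; exact half_delta_apply _ _ _
      set g := Klist ((v :: ws).map δ) with hg
      match w, x with
      | [], x =>
          rw [key, gcount_nil_cons]
          simp [halfWord]
      | a :: w', [] =>
          rw [key]
          show _ = ((0 : ℕ) : ℚ)
          simp [halfWord, prepend_nil]
      | a :: w', c :: x' =>
          rw [key]
          simp only [halfWord, prepend_cons]
          by_cases hca : c = a
          · subst hca
            rw [gcount, if_pos rfl]
            simp only [eq_self_iff_true, if_true]
            have e1 : (g.sum fun y d => d * shuffle w' y x')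
                = ∑ y ∈ g.support ∪ x'.sublists.toFinset, g y * shuffle w' y x' := by
              rw [Finsupp.sum]
              apply Finset.sum_subset Finset.subset_union_left
              intro y _ hy
              simp only [Finsupp.notMem_support_iff] at hy
              rw [hy]; ring
            have e2 : (∑ y ∈ g.support ∪ x'.sublists.toFinset, g y * shuffle w' y x')
                = ∑ y ∈ x'.sublists.toFinset, g y * shuffle w' y x' := by
              symm
              apply Finset.sum_subset Finset.subset_union_right
              intro y _ hy
              simp only [List.mem_toFinset, List.mem_sublists] at hy
              have : mcount w' y x' = 0 := by
                by_contra hm; exact hy (mcount_sublist _ _ _ hm)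
              rw [shuffle_apply, this]; simp
            rw [e1, e2]
            push_cast
            apply Finset.sum_congr rfl
            intro y _
            rw [IH y, shuffle_apply]
            ring
          · rw [gcount, if_neg hca]
            simp [hca]

lemma gcount_length : ∀ ws x, gcount ws x ≠ 0 → x.length = (ws.map List.length).sum
  | [], x => by rw [gcount]; split <;> simp_all
  | [w], x => by rw [gcount]; split <;> simp_all
  | w :: v :: ws, x => by
      match w, x with
      | [], x => rw [gcount_nil_cons]; simp
      | a :: w', [] => intro h; exact absurd rfl h
      | a :: w', c :: x' =>
          rw [gcount]
          intro h
          by_cases hca : c = a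
          · rw [if_pos hca] at h
            obtain ⟨y, _, hy⟩ := Finset.exists_ne_zero_of_sum_ne_zero h
            have h1 : mcount w' y x' ≠ 0 := fun h0 => hy (by rw [h0]; ring)
            have h2 : gcount (v :: ws) y ≠ 0 := fun h0 => hy (by rw [h0]; ring)
            have := mcount_length _ _ _ h1
            have := gcount_length (v :: ws) y h2
            simp_all; omega
          · rw [if_neg hca] at h; exact absurd rfl h

lemma getD_eq_get_old {α : Type*} (l : List α) (d : α) {n : ℕ} (hn : n < l.length) :
    l.getD n d = l.get ⟨n, hn⟩ :=
  List.getD_eq_getElem _ _ hn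

-- masks and merges
def pick (j : ℕ) : List ℕ → Word → Word
  | c :: κ, a :: x => if c = j then a :: pick j κ x else pick j κ x
  | _, _ => []

def msk (b : Bool) : List Bool → Word → Word
  | s :: σ, a :: x => if s = b then a :: msk b σ x else msk b σ x
  | _, _ => []

@[simp] lemma pick_nil (j : ℕ) (x : Word) : pick j [] x = [] := by cases x <;> rfl
@[simp] lemma pick_nil' (j : ℕ) (κ : List ℕ) : pick j κ [] = [] := by cases κ <;> rfl
@[simp] lemma pick_cons (j c : ℕ) (κ : List ℕ) (a : Bool) (x : Word) :
    pick j (c :: κ) (a :: x) = if c = j then a :: pick j κ x else pick j κ x := rfl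
@[simp] lemma msk_nil (b : Bool) (x : Word) : msk b [] x = [] := by cases x <;> rfl
@[simp] lemma msk_nil' (b : Bool) (σ : List Bool) : msk b σ [] = [] := by cases σ <;> rfl
@[simp] lemma msk_cons (b s : Bool) (σ : List Bool) (a : Bool) (x : Word) :
    msk b (s :: σ) (a :: x) = if s = b then a :: msk b σ x else msk b σ x := rfl

-- finiteness helpers
lemma finite_listBool (m : ℕ) : {l : List Bool | l.length = m}.Finite := by
  induction m with
  | zero => exact (Set.finite_singleton ([] : List Bool)).subset (by intro l hl; simp_all)
  | succ m ih =>
      apply ((Set.finite_univ (α := Bool)).image2 List.cons ih).subset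
      rintro (_ | ⟨s, l⟩) hl
      · simp at hl
      · exact Set.mem_image2_of_mem (Set.mem_univ s) (by simpa using hl)

lemma finite_listNat (n m : ℕ) : {l : List ℕ | l.length = m ∧ ∀ c ∈ l, c < n}.Finite := by
  induction m with
  | zero => exact (Set.finite_singleton ([] : List ℕ)).subset (by intro l hl; simp_all [hl.1])
  | succ m ih =>
      apply ((Set.finite_Iio n).image2 List.cons ih).subset
      rintro (_ | ⟨c, l⟩) hl
      · simp at hl
      · obtain ⟨h1, h2⟩ := hl
        exact Set.mem_image2_of_mem (h2 c (by simp)) ⟨by simpa using h1, fun d hd => h2 d (by simp [hd])⟩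

lemma finite_of_lengthB (f : List Bool → Prop) (m : ℕ) (h : ∀ σ, f σ → σ.length = m) :
    Finite {σ // f σ} :=
  Set.Finite.to_subtype ((finite_listBool m).subset h)

lemma finite_of_lengthN (f : List ℕ → Prop) (n m : ℕ)
    (h : ∀ κ, f κ → κ.length = m ∧ ∀ c ∈ κ, c < n) : Finite {κ // f κ} :=
  Set.Finite.to_subtype ((finite_listNat n m).subset h)

-- card helpers
lemma cardUnique {α : Type*} {p : α → Prop} (a : α) (h : p a) (huniq : ∀ b, p b → b = a) :
    Nat.card {x // p x} = 1 := by
  haveI : Unique {x // p x} :=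
    ⟨⟨⟨a, h⟩⟩, fun b => Subtype.ext (huniq b b.2)⟩
  exact Nat.card_unique

lemma cardEmpty {α : Type*} {p : α → Prop} (h : ∀ a, ¬ p a) : Nat.card {x // p x} = 0 := by
  haveI : IsEmpty {x // p x} := ⟨fun b => h b b.2⟩
  exact Nat.card_of_isEmpty

lemma cardCongr {α : Type*} {p q : α → Prop} (h : ∀ a, p a ↔ q a) :
    Nat.card {x // p x} = Nat.card {x // q x} :=
  Nat.card_congr (Equiv.subtypeEquivRight h)

-- splitting a subtype of lists along head
def consEquiv (P : List Bool → Prop) (h : ¬ P []) :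
    {σ // P σ} ≃ {σ // P (false :: σ)} ⊕ {σ // P (true :: σ)} where
  toFun := fun ⟨σ, hσ⟩ =>
    match σ, hσ with
    | [], hσ => absurd hσ h
    | false :: σ', hσ => Sum.inl ⟨σ', hσ⟩
    | true :: σ', hσ => Sum.inr ⟨σ', hσ⟩
  invFun := fun s =>
    match s with
    | Sum.inl ⟨σ', h⟩ => ⟨false :: σ', h⟩
    | Sum.inr ⟨σ', h⟩ => ⟨true :: σ', h⟩
  left_inv := by
    rintro ⟨σ, hσ⟩
    match σ, hσ with
    | [], hσ => exact absurd hσ h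
    | false :: σ', _ => rfl
    | true :: σ', _ => rfl
  right_inv := by rintro (⟨σ', h⟩ | ⟨σ', h⟩) <;> rfl

lemma mcount_nil_left (v x : Word) : mcount [] v x = if x = v then 1 else 0 := by
  rw [mcount]

lemma mcount_nil_right (u x : Word) : mcount u [] x = if x = u then 1 else 0 := by
  cases u with
  | nil => rw [mcount]
  | cons a u => rw [mcount]

lemma mcount_cons (c : Bool) (x' u v : Word) :
    mcount u v (c :: x')
      = (if u.head? = some c then mcount u.tail v x' else 0)
        + (if v.head? = some c then mcount u v.tail x' else 0) := by
  match u, v with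
  | [], [] => simp [mcount_nil_left]
  | [], b :: v' =>
      simp only [mcount_nil_left, List.head?_cons, List.head?_nil, List.tail_cons,
        Option.some_inj, reduceCtorEq, if_false, zero_add]
      by_cases h1 : b = c
      · subst h1
        by_cases h2 : x' = v'
        · subst h2; simp
        · simp [h2, List.cons_eq_cons]
      · simp only [h1, if_false, List.cons_eq_cons]
        rw [if_neg (fun hh => h1 hh.1.symm)]
  | a :: u', [] =>
      simp only [mcount_nil_right, List.head?_cons, List.head?_nil, List.tail_cons,
        Option.some_inj, reduceCtorEq, if_false, add_zero]
      by_cases h1 : a = c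
      · subst h1
        by_cases h2 : x' = u'
        · subst h2; simp
        · simp [h2, List.cons_eq_cons]
      · simp only [h1, if_false, List.cons_eq_cons]
        rw [if_neg (fun hh => h1 hh.1.symm)]
  | a :: u', b :: v' =>
      rw [mcount]
      simp only [List.head?_cons, List.tail_cons, Option.some_inj]
      congr 1
      · by_cases h : c = a
        · simp [h]
        · rw [if_neg h, if_neg (fun hh => h hh.symm)]
      · by_cases h : c = b
        · simp [h]
        · rw [if_neg h, if_neg (fun hh => h hh.symm)]

lemma cardMerge : ∀ (x u v : Word),
    Nat.card {σ : List Bool // σ.length = x.length ∧ msk false σ x = u ∧ msk true σ x = v}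
      = mcount u v x := by
  intro x
  induction x with
  | nil =>
      intro u v
      match u, v with
      | [], [] =>
          rw [cardUnique ([] : List Bool) (by simp) (fun b hb => by
            rcases b with _ | ⟨s, b⟩ <;> simp_all)]
          rw [mcount]; simp
      | [], b :: v =>
          rw [cardEmpty (fun σ hσ => by rcases σ with _|⟨s,σ⟩ <;> simp_all)]
          rw [mcount]; simp
      | a :: u, v => rw [cardEmpty (fun σ hσ => by rcases σ with _|⟨s,σ⟩ <;> simp_all)]
                     rw [mcount.eq_def]
                     match v with
                     | [] => simp
                     | b :: v => simp
  | cons c x' IH =>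
      intro u v
      haveI hF : Finite {σ // (false :: σ).length = (c :: x').length ∧
          msk false (false :: σ) (c :: x') = u ∧ msk true (false :: σ) (c :: x') = v} :=
        finite_of_lengthB _ x'.length (fun σ hσ => by simpa using hσ.1)
      haveI hT : Finite {σ // (true :: σ).length = (c :: x').length ∧
          msk false (true :: σ) (c :: x') = u ∧ msk true (true :: σ) (c :: x') = v} :=
        finite_of_lengthB _ x'.length (fun σ hσ => by simpa using hσ.1)
      rw [Nat.card_congr (consEquiv _ (by simp)), Nat.card_sum, mcount_cons]
      congr 1
      · match u with
        | [] => rw [cardEmpty (fun σ hσ => by simp_all)]; simp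
        | a :: u' =>
            by_cases hca : a = c
            · subst hca
              simp only [List.head?, List.tail, if_pos rfl, ← IH u' v]
              exact cardCongr (fun σ => by simp)
            · rw [cardEmpty (fun σ hσ => by
                obtain ⟨h1, h2, h3⟩ := hσ
                simp at h2
                exact hca (h2.1.symm)), if_neg (by simp [Option.some_inj]; exact hca)]
      · match v with
        | [] => rw [cardEmpty (fun σ hσ => by simp_all)]; simp
        | b :: v' =>
            by_cases hcb : b = c
            · subst hcb
              simp only [List.head?, List.tail, if_pos rfl, ← IH u v']
              exact cardCongr (fun σ => by simp)
            · rw [cardEmpty (fun σ hσ => by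
                obtain ⟨h1, h2, h3⟩ := hσ
                simp at h3
                exact hcb (h3.1.symm)), if_neg (by simp [Option.some_inj]; exact hcb)]

-- colorings
def GC (ws : List Word) (κ : List ℕ) (x : Word) : Prop :=
  κ.length = x.length ∧ (∀ c ∈ κ, c < ws.length) ∧
  (∀ j, pick j κ x = ws.getD j []) ∧
  (∀ j k, j < k → k < ws.length → κ.idxOf j < κ.idxOf k)

def posb : ℕ → Bool
  | 0 => false
  | _ + 1 => true

def σof (κ : List ℕ) : List Bool := κ.map posb

def κred (κ : List ℕ) : List ℕ :=
  κ.filterMap (fun c => match c with | 0 => none | d + 1 => some d)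

def recolor : List Bool → List ℕ → List ℕ
  | [], _ => []
  | false :: σ, κ => 0 :: recolor σ κ
  | true :: _, [] => []
  | true :: σ, d :: κ => (d + 1) :: recolor σ κ

@[simp] lemma σof_nil : σof [] = [] := rfl
@[simp] lemma σof_cons (c : ℕ) (κ : List ℕ) : σof (c :: κ) = posb c :: σof κ := rfl
@[simp] lemma κred_nil : κred [] = [] := rfl
@[simp] lemma κred_zero (κ : List ℕ) : κred (0 :: κ) = κred κ := rfl
@[simp] lemma κred_succ (d : ℕ) (κ : List ℕ) : κred ((d + 1) :: κ) = d :: κred κ := rfl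

lemma recolor_length : ∀ (σ : List Bool) (κ : List ℕ), σ.count true = κ.length →
    (recolor σ κ).length = σ.length
  | [], _, _ => rfl
  | false :: σ, κ, h => by
      rw [recolor]
      simp only [List.length_cons]
      rw [recolor_length σ κ (by simpa using h)]
  | true :: σ, [], h => by simp [List.count_cons] at h
  | true :: σ, d :: κ, h => by
      rw [recolor]
      simp only [List.length_cons]
      rw [recolor_length σ κ (by simp [List.count_cons] at h ⊢; omega)]

lemma σof_recolor : ∀ (σ : List Bool) (κ : List ℕ), σ.count true = κ.length →
    σof (recolor σ κ) = σ
  | [], _, _ => rfl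
  | false :: σ, κ, h => by
      rw [recolor, σof_cons, σof_recolor σ κ (by simpa using h)]; rfl
  | true :: σ, [], h => by simp [List.count_cons] at h
  | true :: σ, d :: κ, h => by
      rw [recolor, σof_cons, σof_recolor σ κ (by simp [List.count_cons] at h ⊢; omega)]; rfl

lemma κred_recolor : ∀ (σ : List Bool) (κ : List ℕ), σ.count true = κ.length →
    κred (recolor σ κ) = κ
  | [], κ, h => by
      have h0 : κ.length = 0 := by simpa using h.symm
      rw [List.length_eq_zero_iff] at h0
      simp [recolor, h0]
  | false :: σ, κ, h => by
      rw [recolor, κred_zero, κred_recolor σ κ (by simpa using h)]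
  | true :: σ, [], h => by simp [List.count_cons] at h
  | true :: σ, d :: κ, h => by
      rw [recolor, κred_succ, κred_recolor σ κ (by simp [List.count_cons] at h ⊢; omega)]

lemma recolor_σof : ∀ κ : List ℕ, recolor (σof κ) (κred κ) = κ
  | [] => rfl
  | 0 :: κ => by rw [σof_cons, κred_zero]; show recolor (false :: _) _ = _
                 rw [recolor, recolor_σof κ]
  | (d + 1) :: κ => by rw [σof_cons, κred_succ]; show recolor (true :: _) _ = _
                       rw [recolor, recolor_σof κ]

lemma κred_length (κ : List ℕ) : (κred κ).length = (σof κ).count true := by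
  induction κ with
  | nil => rfl
  | cons c κ ih =>
      match c with
      | 0 => simp [List.count_cons, posb, ih]
      | d + 1 => simp [List.count_cons, posb, ih]

lemma msk_length : ∀ (σ : List Bool) (x : Word), σ.length = x.length →
    (msk true σ x).length = σ.count true
  | [], [], _ => rfl
  | s :: σ, a :: x, h => by
      cases s <;> simp [List.count_cons, msk_length σ x (by simpa using h)]

lemma msk_sublist : ∀ (b : Bool) (σ : List Bool) (x : Word), (msk b σ x).Sublist x
  | _, [], x => by simp
  | _, _ :: _, [] => by simp
  | b, s :: σ, a :: x => by
      rw [msk_cons]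
      split
      · exact (msk_sublist b σ x).cons₂ a
      · exact (msk_sublist b σ x).cons a

lemma pick_zero_msk : ∀ (κ : List ℕ) (x : Word), pick 0 κ x = msk false (σof κ) x
  | [], x => by simp
  | c :: κ, [] => by simp
  | c :: κ, a :: x => by
      match c with
      | 0 => simp [posb, pick_zero_msk κ x]
      | d + 1 => simp [posb, pick_zero_msk κ x]

lemma pick_succ_red : ∀ (j : ℕ) (κ : List ℕ) (x : Word),
    pick (j + 1) κ x = pick j (κred κ) (msk true (σof κ) x)
  | j, [], x => by simp
  | j, c :: κ, [] => by simp
  | j, c :: κ, a :: x => by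
      match c with
      | 0 => simp [posb, pick_succ_red j κ x]
      | d + 1 =>
          simp only [pick_cons, κred_succ, σof_cons, posb, msk_cons, if_pos rfl, Nat.add_right_cancel_iff]
          rw [pick_succ_red j κ x]
          rfl

lemma recolor_mem : ∀ (σ : List Bool) (κ : List ℕ) (c : ℕ), c ∈ recolor σ κ →
    c = 0 ∨ ∃ d ∈ κ, c = d + 1
  | [], κ, c, h => by simp [recolor] at h
  | false :: σ, κ, c, h => by
      rw [recolor, List.mem_cons] at h
      rcases h with h | h
      · exact Or.inl h
      · exact recolor_mem σ κ c h
  | true :: σ, [], c, h => by simp [recolor] at h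
  | true :: σ, d :: κ, c, h => by
      rw [recolor, List.mem_cons] at h
      rcases h with h | h
      · exact Or.inr ⟨d, by simp, h⟩
      · rcases recolor_mem σ κ c h with h | ⟨e, he, rfl⟩
        · exact Or.inl h
        · exact Or.inr ⟨e, by simp [he], rfl⟩

lemma κred_mem : ∀ (κ : List ℕ) (c : ℕ), c ∈ κred κ → c + 1 ∈ κ := by
  intro κ
  induction κ with
  | nil => simp
  | cons e κ ih =>
      intro c h
      match e with
      | 0 => exact List.mem_cons_of_mem _ (ih c (by simpa using h))
      | d + 1 =>
          rw [κred_succ, List.mem_cons] at h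
          rcases h with h | h
        
          · subst h; exact List.mem_cons_self
          · exact List.mem_cons_of_mem _ (ih c h)

lemma indexOf_red : ∀ (κ : List ℕ) (j k : ℕ), j ≠ k →
    (κ.idxOf (j + 1) < κ.idxOf (k + 1) ↔ (κred κ).idxOf j < (κred κ).idxOf k)
  | [], j, k, h => by simp
  | 0 :: κ, j, k, h => by
      rw [List.idxOf_cons_ne _ (by omega : (0:ℕ) ≠ j + 1),
        List.idxOf_cons_ne _ (by omega : (0:ℕ) ≠ k + 1), κred_zero]
      simp only [Nat.succ_lt_succ_iff]
      exact indexOf_red κ j k h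
  | (d + 1) :: κ, j, k, h => by
      by_cases hdj : d = j
      · subst hdj
        rw [κred_succ, List.idxOf_cons_self, List.idxOf_cons_self,
          List.idxOf_cons_ne _ (by omega : d + 1 ≠ k + 1),
          List.idxOf_cons_ne _ (by omega : d ≠ k)]
        simp
      · by_cases hdk : d = k
        · subst hdk
          rw [κred_succ, List.idxOf_cons_self, List.idxOf_cons_self]
          simp
        · rw [κred_succ, List.idxOf_cons_ne _ (by omega : d + 1 ≠ j + 1),
            List.idxOf_cons_ne _ (by omega : d + 1 ≠ k + 1),
            List.idxOf_cons_ne _ hdj, List.idxOf_cons_ne _ hdk]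
          simp only [Nat.succ_lt_succ_iff]
          exact indexOf_red κ j k h

lemma pick_not_mem : ∀ (j : ℕ) (κ : List ℕ) (x : Word), j ∉ κ → pick j κ x = []
  | j, [], x, _ => by simp
  | j, c :: κ, [], _ => by simp
  | j, c :: κ, a :: x, h => by
      rw [pick_cons, if_neg (fun hc => h (by subst hc; exact List.mem_cons_self)),
        pick_not_mem j κ x (fun hm => h (List.mem_cons_of_mem c hm))]

-- sigma counting helpers
lemma nat_card_sigma {ι : Type*} [Fintype ι] (f : ι → Type*) [∀ i, Finite (f i)] :
    Nat.card (Σ i, f i) = ∑ i, Nat.card (f i) := by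
  classical
  letI : ∀ i, Fintype (f i) := fun i => Fintype.ofFinite (f i)
  simp [Nat.card_eq_fintype_card, Fintype.card_sigma]

lemma card_fiber_sum {α β : Type*} [DecidableEq β] (p : α → Prop) (f : α → β) (s : Finset β)
    [Finite {a // p a}] (hf : ∀ a, p a → f a ∈ s) :
    Nat.card {a // p a} = ∑ y ∈ s, Nat.card {a // p a ∧ f a = y} := by
  classical
  set g : {a // p a} → {y // y ∈ s} := fun a => ⟨f a.1, hf a.1 a.2⟩ with hg
  have e1 : Nat.card {a // p a} = Nat.card (Σ y : {y // y ∈ s}, {a : {a // p a} // g a = y}) :=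
    (Nat.card_congr (Equiv.sigmaFiberEquiv g)).symm
  rw [e1, nat_card_sigma]
  rw [← Finset.sum_coe_sort s (fun y => Nat.card {a // p a ∧ f a = y})]
  apply Finset.sum_congr rfl
  intro y _
  apply Nat.card_congr
  exact
    { toFun := fun b => ⟨b.1.1, b.1.2, congrArg Subtype.val b.2⟩
      invFun := fun b => ⟨⟨b.1, b.2.1⟩, Subtype.ext b.2.2⟩
      left_inv := fun b => by ext : 2 <;> rfl
      right_inv := fun b => rfl }

lemma pick_zero_replicate : ∀ x : Word, pick 0 (List.replicate x.length 0) x = x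
  | [] => rfl
  | a :: x => by
      rw [List.length_cons, List.replicate_succ, pick_cons, if_pos rfl, pick_zero_replicate x]

lemma cardGC_single (w x : Word) :
    Nat.card {κ // GC [w] κ x} = gcount [w] x := by
  rw [gcount]
  by_cases hxw : x = w
  · subst hxw
    rw [if_pos rfl]
    apply cardUnique (List.replicate x.length 0)
    · refine ⟨by simp, fun c hc => ?_, fun j => ?_, fun j k hjk hk => by simp at hk; omega⟩
      · rw [List.eq_of_mem_replicate hc]; simp
      · match j with
        | 0 => simpa using pick_zero_replicate x
        | j + 1 =>
            rw [pick_not_mem _ _ _ (by simp [List.mem_replicate])]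
            simp
    · intro κ hκ
      obtain ⟨hlen, hb, hp, _⟩ := hκ
      have hall : ∀ c ∈ κ, c = 0 := fun c hc => by have := hb c hc; simp at this; omega
      exact List.eq_replicate_iff.mpr ⟨hlen, hall⟩
  · rw [if_neg hxw]
    apply cardEmpty
    rintro κ ⟨hlen, hb, hp, _⟩
    have hall : ∀ c ∈ κ, c = 0 := fun c hc => by have := hb c hc; simp at this; omega
    have hκ : κ = List.replicate x.length 0 := List.eq_replicate_iff.mpr ⟨hlen, hall⟩
    have := hp 0
    rw [hκ, pick_zero_replicate] at this
    simp at this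
    exact hxw this

lemma GC_cons_structure {w v : Word} {ws : List Word} {κ : List ℕ} {c : Bool} {x' : Word}
    (h : GC (w :: v :: ws) κ (c :: x')) :
    κ = 0 :: κ.tail ∧ w = c :: pick 0 κ.tail x' := by
  obtain ⟨hlen, hb, hp, hord⟩ := h
  match κ, hlen with
  | [], hlen => simp at hlen
  | j :: κ', hlen =>
      have hj0 : j = 0 := by
        by_contra hj
        match j, hj with
        | e + 1, _ =>
            have hbound : e + 1 < (w :: v :: ws).length := hb _ (List.mem_cons_self)
            have hi := hord 0 (e + 1) (by omega) hbound
            rw [List.idxOf_cons_self] at hi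
            omega
      subst hj0
      refine ⟨rfl, ?_⟩
      have h0 := hp 0
      rw [pick_cons, if_pos rfl] at h0
      simpa using h0.symm

lemma fwd_ok {v : Word} {ws : List Word} {a : Bool} {w' x' y : Word} {κ : List ℕ}
    (hfull : GC ((a :: w') :: v :: ws) κ (a :: x') ∧ msk true (σof κ.tail) x' = y) :
    ((σof κ.tail).length = x'.length ∧ msk false (σof κ.tail) x' = w'
        ∧ msk true (σof κ.tail) x' = y)
      ∧ GC (v :: ws) (κred κ.tail) y := by
  obtain ⟨hκ, hy⟩ := hfull
  obtain ⟨hcons, hwhead⟩ := GC_cons_structure hκ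
  obtain ⟨hlen, hb, hp, hord⟩ := hκ
  have hlen' : κ.tail.length = x'.length := by
    rw [hcons] at hlen; simpa using hlen
  have hσlen : (σof κ.tail).length = x'.length := by simpa [σof] using hlen'
  have hw' : msk false (σof κ.tail) x' = w' := by
    rw [← pick_zero_msk]
    exact List.cons_injective.eq_iff.mp hwhead.symm
  refine ⟨⟨hσlen, hw', hy⟩, ?_, ?_, ?_, ?_⟩
  · rw [κred_length, ← msk_length _ _ hσlen, hy]
  · intro d hd
    have : d + 1 ∈ κ.tail := κred_mem _ _ hd
    have : d + 1 ∈ κ := by rw [hcons]; exact List.mem_cons_of_mem _ this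
    have := hb _ this
    simpa using this
  · intro j
    have h1 : pick (j + 1) κ (a :: x') = pick (j + 1) κ.tail x' := by
      nth_rewrite 1 [hcons]
      rw [pick_cons, if_neg (by omega)]
    have h2 := hp (j + 1)
    rw [h1, pick_succ_red, hy] at h2
    rw [h2]
    simp
  · intro j k hjk hk
    have h3 := hord (j + 1) (k + 1) (by omega) (by simp at hk ⊢; omega)
    rw [hcons, List.idxOf_cons_ne _ (by omega : (0:ℕ) ≠ j + 1),
      List.idxOf_cons_ne _ (by omega : (0:ℕ) ≠ k + 1)] at h3
    exact (indexOf_red κ.tail j k (by omega)).mp (by omega)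

lemma bwd_ok {v : Word} {ws : List Word} {a : Bool} {w' x' y : Word} {σ : List Bool}
    {κ'' : List ℕ}
    (hσ : σ.length = x'.length ∧ msk false σ x' = w' ∧ msk true σ x' = y)
    (hκ'' : GC (v :: ws) κ'' y) :
    GC ((a :: w') :: v :: ws) (0 :: recolor σ κ'') (a :: x')
      ∧ msk true (σof (0 :: recolor σ κ'').tail) x' = y := by
  obtain ⟨hσlen, hw', hyy⟩ := hσ
  obtain ⟨hlen'', hb'', hp'', hord''⟩ := hκ''
  have hcnt : σ.count true = κ''.length := by
    rw [hlen'', ← hyy, msk_length _ _ hσlen]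
  have hσr : σof (recolor σ κ'') = σ := σof_recolor _ _ hcnt
  have hκr : κred (recolor σ κ'') = κ'' := κred_recolor _ _ hcnt
  have hrlen : (recolor σ κ'').length = σ.length := recolor_length _ _ hcnt
  refine ⟨⟨?_, ?_, ?_, ?_⟩, ?_⟩
  · simp [hrlen, hσlen]
  · intro c hc
    rw [List.mem_cons] at hc
    rcases hc with rfl | hc
    · simp
    · rcases recolor_mem _ _ _ hc with rfl | ⟨d, hd, rfl⟩
      · simp
      · have := hb'' d hd
        simp at this ⊢
        omega
  · intro j
    match j with
    | 0 =>
        rw [pick_cons, if_pos rfl, pick_zero_msk, hσr, hw']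
        simp
    | j + 1 =>
        rw [pick_cons, if_neg (by omega), pick_succ_red, hσr, hκr, hyy, hp'' j]
        simp
  · intro j k hjk hk
    match j, k, hjk with
    | 0, k + 1, _ =>
        rw [List.idxOf_cons_self, List.idxOf_cons_ne _ (by omega : (0:ℕ) ≠ k + 1)]
        omega
    | j + 1, k + 1, _ =>
        rw [List.idxOf_cons_ne _ (by omega : (0:ℕ) ≠ j + 1),
          List.idxOf_cons_ne _ (by omega : (0:ℕ) ≠ k + 1)]
        have := hord'' j k (by omega) (by simp at hk ⊢; omega)
        have h4 := (indexOf_red (recolor σ κ'') j k (by omega)).mpr (by rw [hκr]; exact this)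
        omega
  · rw [List.tail_cons, hσr, hyy]

lemma cardGC_fiber {v : Word} {ws : List Word} {a : Bool} {w' x' y : Word}
    (hcard : Nat.card {κ'' // GC (v :: ws) κ'' y} = gcount (v :: ws) y) :
    Nat.card {κ // GC ((a :: w') :: v :: ws) κ (a :: x') ∧ msk true (σof κ.tail) x' = y}
      = mcount w' y x' * gcount (v :: ws) y := by
  rw [← cardMerge x' w' y, ← hcard, ← Nat.card_prod]
  apply Nat.card_congr
  exact
    { toFun := fun p => (⟨σof p.1.tail, (fwd_ok p.2).1⟩, ⟨κred p.1.tail, (fwd_ok p.2).2⟩)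
      invFun := fun q => ⟨0 :: recolor q.1.1 q.2.1, bwd_ok q.1.2 q.2.2⟩
      left_inv := fun p => by
        apply Subtype.ext
        show 0 :: recolor (σof p.1.tail) (κred p.1.tail) = p.1
        rw [recolor_σof]
        exact (GC_cons_structure p.2.1).1.symm
      right_inv := fun q => by
        obtain ⟨⟨σ, hσ⟩, ⟨κ'', hκ''⟩⟩ := q
        have hcnt : σ.count true = κ''.length := by
          rw [hκ''.1, ← hσ.2.2, msk_length _ _ hσ.1]
        apply Prod.ext
        · apply Subtype.ext
          show σof (0 :: recolor σ κ'').tail = σ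
          rw [List.tail_cons]
          exact σof_recolor _ _ hcnt
        · apply Subtype.ext
          show κred (0 :: recolor σ κ'').tail = κ''
          rw [List.tail_cons]
          exact κred_recolor _ _ hcnt }

lemma cardGC : ∀ (w : Word) (ws : List Word), (∀ u ∈ w :: ws, u ≠ []) → ∀ x,
    Nat.card {κ // GC (w :: ws) κ x} = gcount (w :: ws) x
  | w, [], _, x => cardGC_single w x
  | w, v :: ws, hw, x => by
      have hwne : w ≠ [] := hw w (List.mem_cons_self)
      match w, hwne with
      | a :: w', _ =>
        match x with
        | [] =>
            have : gcount ((a :: w') :: v :: ws) [] = 0 := rfl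
            rw [this]
            apply cardEmpty
            rintro κ ⟨hlen, _, hp, _⟩
            have hκnil : κ = [] := by simpa using List.length_eq_zero_iff.mp (by simpa using hlen)
            have := hp 0
            rw [hκnil] at this
            simp at this
        | c :: x' =>
            by_cases hca : c = a
            · subst hca
              haveI : Finite {κ // GC ((c :: w') :: v :: ws) κ (c :: x')} :=
                finite_of_lengthN _ ((v :: ws).length + 1) (x'.length + 1)
                  (fun κ h => ⟨by simpa using h.1, fun d hd => by simpa using h.2.1 d hd⟩)
              rw [card_fiber_sum (fun κ => GC ((c :: w') :: v :: ws) κ (c :: x'))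
                (fun κ => msk true (σof κ.tail) x') x'.sublists.toFinset
                (fun κ _ => by rw [List.mem_toFinset, List.mem_sublists]; exact msk_sublist _ _ _)]
              rw [gcount, if_pos rfl]
              apply Finset.sum_congr rfl
              intro y _
              exact cardGC_fiber (cardGC v ws (fun u hu => hw u (List.mem_cons_of_mem _ hu)) y)
            · rw [gcount, if_neg hca]
              apply cardEmpty
              intro κ hκ
              have := (GC_cons_structure hκ).2
              rw [List.cons_eq_cons] at this
              exact hca this.1.symm

-- (A) sorting a filtered fiber
lemma sort_filter_univ {m : ℕ} (p : Fin m → Prop) [DecidablePred p] :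
    (Finset.univ.filter p).sort (· ≤ ·) = (List.finRange m).filter (fun i => decide (p i)) := by
  haveI : IsAntisymm (Fin m) (· ≤ ·) := ⟨fun a b h1 h2 => le_antisymm h1 h2⟩
  refine (fun p s1 s2 => List.Perm.eq_of_pairwise' (r := (· ≤ ·)) s1 s2 p) ?_ ?_ ?_
  · apply List.perm_of_nodup_nodup_toFinset_eq (Finset.sort_nodup _ _)
      ((List.nodup_finRange m).filter _)
    rw [Finset.sort_toFinset]
    ext i
    simp [List.mem_filter]
  · exact Finset.pairwise_sort _ _
  · exact List.Pairwise.imp le_of_lt ((List.pairwise_lt_finRange m).filter _)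

-- (B) reading a fiber = pick
lemma finRange_map_val (n : ℕ) : (List.finRange n).map Fin.val = List.range n := by
  induction n with
  | zero => rfl
  | succ n ih =>
      rw [List.finRange_succ, List.range_succ_eq_map, List.map_cons, List.map_map, ← ih,
        List.map_map]
      rfl

lemma filterMap_pickN : ∀ (κ : List ℕ) (x : Word), κ.length = x.length → ∀ (j : ℕ),
    ((List.range x.length).filter (fun i => decide (κ.getD i 0 = j))).map
        (fun i => x.getD i false)
      = pick j κ x
  | [], [], _, j => by simp
  | [], a :: x', h, j => by simp at h
  | c :: κ', [], h, j => by simp at h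
  | c :: κ', a :: x', h, j => by
      have h' : κ'.length = x'.length := by simpa using h
      rw [show (a :: x').length = x'.length + 1 from rfl, List.range_succ_eq_map]
      rw [List.filter_cons]
      have htail : ((List.map Nat.succ (List.range x'.length)).filter
            (fun i => decide ((c :: κ').getD i 0 = j))).map (fun i => (a :: x').getD i false)
          = pick j κ' x' := by
        rw [List.filter_map, List.map_map]
        have e1 : ((fun i => decide ((c :: κ').getD i 0 = j)) ∘ Nat.succ)
            = fun i => decide (κ'.getD i 0 = j) := funext fun i => by simp
        rw [e1]
        have e2 : ((fun i => (a :: x').getD i false) ∘ Nat.succ)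
            = fun i => x'.getD i false := funext fun i => by simp
        rw [e2]
        exact filterMap_pickN κ' x' h' j
      by_cases hc : c = j
      · rw [if_pos (by simpa using hc), List.map_cons, htail, pick_cons, if_pos hc]
        simp
      · rw [if_neg (by simpa using hc), htail, pick_cons, if_neg hc]

lemma filterMap_pick (κ : List ℕ) (x : Word) (h : κ.length = x.length) (j : ℕ) :
    ((List.finRange x.length).filter (fun i => decide (κ.getD i.val 0 = j))).map x.get
      = pick j κ x := by
  rw [← filterMap_pickN κ x h j]
  have e0 : x.get = fun i : Fin x.length => x.getD i.val false :=
    funext fun i => (getD_eq_get_old _ _ i.isLt).symm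
  rw [e0]
  rw [show (fun i : Fin x.length => x.getD i.val false)
      = (fun n => x.getD n false) ∘ Fin.val from rfl]
  rw [← List.map_map]
  congr 1
  rw [show List.range x.length = (List.finRange x.length).map Fin.val from
    (finRange_map_val x.length).symm]
  rw [List.filter_map]
  rw [show ((fun i => decide (κ.getD i 0 = j)) ∘ Fin.val)
      = (fun i : Fin x.length => decide (κ.getD i.val 0 = j)) from rfl]

lemma indexOf_le_of_get : ∀ (κ : List ℕ) (j : ℕ) (i : ℕ) (h : i < κ.length),
    κ.get ⟨i, h⟩ = j → κ.idxOf j ≤ i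
  | c :: κ', j, 0, _, hg => by
      simp at hg
      subst hg
      rw [List.idxOf_cons_self]
  | c :: κ', j, i + 1, h, hg => by
      by_cases hc : c = j
      · subst hc
        rw [List.idxOf_cons_self]
        omega
      · rw [List.idxOf_cons_ne _ hc]
        have := indexOf_le_of_get κ' j i (by simpa using h) (by simpa using hg)
        omega

-- (C) the minimum of a fiber
lemma min_fiber {m : ℕ} (κ : List ℕ) (h : κ.length = m) (j : ℕ) (hj : j ∈ κ) :
    (Finset.univ.filter (fun i : Fin m => κ.getD i.val 0 = j)).min
      = ((⟨κ.idxOf j, h ▸ List.idxOf_lt_length_iff.mpr hj⟩ : Fin m) : WithTop (Fin m)) := by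
  have hlt : κ.idxOf j < κ.length := List.idxOf_lt_length_iff.mpr hj
  set i₀ : Fin m := ⟨κ.idxOf j, h ▸ hlt⟩ with hi₀
  have hmem : i₀ ∈ Finset.univ.filter (fun i : Fin m => κ.getD i.val 0 = j) := by
    rw [Finset.mem_filter]
    refine ⟨Finset.mem_univ _, ?_⟩
    rw [getD_eq_get_old _ _ (show (i₀ : ℕ) < κ.length from hlt)]
    exact List.idxOf_get _
  apply le_antisymm
  · exact Finset.min_le hmem
  · apply Finset.le_min
    intro b hb
    rw [Finset.mem_filter] at hb
    have hb2 := hb.2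
    have hblt : (b : ℕ) < κ.length := by rw [h]; exact b.isLt
    rw [getD_eq_get_old _ _ hblt] at hb2
    have := indexOf_le_of_get κ j b hblt hb2
    exact WithTop.coe_le_coe.mpr (by rw [Fin.le_def]; exact this)

lemma getD_ofFn {m : ℕ} (f : Fin m → ℕ) (i : Fin m) : (List.ofFn f).getD i.val 0 = f i := by
  rw [getD_eq_get_old _ _ (by simp [i.2] : (i : ℕ) < (List.ofFn f).length), List.get_ofFn]
  exact congrArg f (Fin.ext rfl)

-- occurrence of colors
lemma mem_of_pick_ne_nil {j : ℕ} {κ : List ℕ} {x : Word} (h : pick j κ x ≠ []) : j ∈ κ := by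
  by_contra hj
  exact h (pick_not_mem j κ x hj)

noncomputable def gsEquiv (ws : List Word) (x : Word) (hw : ∀ w ∈ ws, w ≠ []) :
    {S : Fin ws.length → Finset (Fin x.length) // GoodShuffle ws x S} ≃ {κ // GC ws κ x} := by
  classical
  refine
    { toFun := fun p =>
        ⟨List.ofFn (fun i : Fin x.length => (Fintype.choose (fun j => i ∈ p.1 j) (p.2.1 i)).val),
         ?_⟩
      invFun := fun q =>
        ⟨fun j => Finset.univ.filter (fun i : Fin x.length => q.1.getD i.val 0 = j.val), ?_⟩
      left_inv := ?_
      right_inv := ?_ }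
  · -- GC for toFun
    obtain ⟨S, hS⟩ := p
    set f : Fin x.length → Fin ws.length := fun i => Fintype.choose (fun j => i ∈ S j) (hS.1 i)
      with hf
    have hfS : ∀ i j, f i = j ↔ i ∈ S j := by
      intro i j
      constructor
      · rintro rfl; exact Fintype.choose_spec (fun j => i ∈ S j) (hS.1 i)
      · intro hij
        exact ExistsUnique.unique (hS.1 i)
          (Fintype.choose_spec (fun j => i ∈ S j) (hS.1 i)) hij
    set κ : List ℕ := List.ofFn (fun i => (f i).val) with hκ
    have hκlen : κ.length = x.length := by simp [hκ]
    have hfib : ∀ j : Fin ws.length,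
        (Finset.univ.filter (fun i : Fin x.length => κ.getD i.val 0 = j.val)) = S j := by
      intro j
      ext i
      rw [Finset.mem_filter]
      simp only [Finset.mem_univ, true_and, hκ, getD_ofFn]
      rw [show ((f i).val = j.val ↔ f i = j) from ⟨Fin.ext, fun h => by rw [h]⟩, hfS]
    have hpick : ∀ j : ℕ, pick j κ x = ws.getD j [] := by
      intro j
      by_cases hj : j < ws.length
      · rw [← filterMap_pick κ x hκlen j]
        have : (fun i : Fin x.length => κ.getD i.val 0 = j)
            = (fun i : Fin x.length => κ.getD i.val 0 = (⟨j, hj⟩ : Fin ws.length).val) := rfl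
        rw [show ((List.finRange x.length).filter (fun i => decide (κ.getD i.val 0 = j)))
            = Finset.sort (Finset.univ.filter
                (fun i : Fin x.length => κ.getD i.val 0 = (⟨j, hj⟩ : Fin ws.length).val)) (· ≤ ·)
          from (sort_filter_univ _).symm]
        rw [hfib ⟨j, hj⟩, hS.2.1 ⟨j, hj⟩, getD_eq_get_old _ _ hj]
      · rw [pick_not_mem, List.getD_eq_default _ _ (by omega)]
        intro hjm
        rw [hκ, List.mem_ofFn] at hjm
        obtain ⟨i, hi⟩ := hjm
        exact hj (hi ▸ (f i).2)
    refine ⟨hκlen, ?_, hpick, ?_⟩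
    · intro c hc
      rw [hκ, List.mem_ofFn] at hc
      obtain ⟨i, hi⟩ := hc
      exact hi ▸ (f i).2
    · intro j k hjk hk
      have hjlt : j < ws.length := by omega
      have hjmem : j ∈ κ := by
        apply mem_of_pick_ne_nil (x := x)
        rw [hpick j, getD_eq_get_old _ _ hjlt]
        exact fun hh => hw _ (List.get_mem ws _) hh
      have hkmem : k ∈ κ := by
        apply mem_of_pick_ne_nil (x := x)
        rw [hpick k, getD_eq_get_old _ _ hk]
        exact fun hh => hw _ (List.get_mem ws _) hh
      have hmin := hS.2.2 ⟨j, hjlt⟩ ⟨k, hk⟩ (by rw [Fin.mk_lt_mk]; omega)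
      rw [← hfib ⟨j, hjlt⟩, ← hfib ⟨k, hk⟩] at hmin
      rw [min_fiber κ hκlen j hjmem, min_fiber κ hκlen k hkmem] at hmin
      have h5 := WithTop.coe_lt_coe.mp hmin
      rw [Fin.mk_lt_mk] at h5
      exact h5
  · -- GoodShuffle for invFun
    obtain ⟨κ, hκ⟩ := q
    obtain ⟨hlen, hb, hp, hord⟩ := hκ
    have hgetmem : ∀ i : Fin x.length, κ.getD i.val 0 ∈ κ := by
      intro i
      rw [getD_eq_get_old _ _ (by omega : (i : ℕ) < κ.length)]
      exact List.get_mem _ _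
    refine ⟨fun i => ?_, fun j => ?_, fun j k hjk => ?_⟩
    · refine ⟨⟨κ.getD i.val 0, hb _ (hgetmem i)⟩, by simp, ?_⟩
      intro j hj
      rw [Finset.mem_filter] at hj
      exact Fin.ext hj.2.symm
    · rw [sort_filter_univ, filterMap_pick κ x hlen, hp j.val, getD_eq_get_old _ _ j.2]
    · have hjmem : (j : ℕ) ∈ κ := by
        apply mem_of_pick_ne_nil (x := x)
        rw [hp j.val, getD_eq_get_old _ _ j.2]
        exact fun hh => hw _ (List.get_mem ws _) hh
      have hkmem : (k : ℕ) ∈ κ := by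
        apply mem_of_pick_ne_nil (x := x)
        rw [hp k.val, getD_eq_get_old _ _ k.2]
        exact fun hh => hw _ (List.get_mem ws _) hh
      rw [min_fiber κ hlen _ hjmem, min_fiber κ hlen _ hkmem]
      apply WithTop.coe_lt_coe.mpr
      rw [Fin.lt_def]
      exact hord j.val k.val (Fin.lt_def.mp hjk) k.2
  · -- left_inv
    rintro ⟨S, hS⟩
    apply Subtype.ext
    funext j
    ext i
    rw [Finset.mem_filter]
    simp only [Finset.mem_univ, true_and, getD_ofFn]
    constructor
    · intro h
      have : Fintype.choose (fun j => i ∈ S j) (hS.1 i) = j := Fin.ext h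
      rw [← this]
      exact Fintype.choose_spec (fun j => i ∈ S j) (hS.1 i)
    · intro h
      exact congrArg Fin.val (ExistsUnique.unique (hS.1 i)
        (Fintype.choose_spec (fun j => i ∈ S j) (hS.1 i)) h)
  · -- right_inv
    rintro ⟨κ, hκ⟩
    apply Subtype.ext
    apply List.ext_get (by simp [hκ.1])
    intro i h1 h2
    rw [List.get_ofFn]
    have : ∀ (ii : Fin x.length) (hu : ∃! j : Fin ws.length, ii ∈ Finset.univ.filter
            (fun i' : Fin x.length => κ.getD i'.val 0 = j.val)),
        (Fintype.choose (fun j : Fin ws.length => ii ∈ Finset.univ.filter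
            (fun i' : Fin x.length => κ.getD i'.val 0 = j.val)) hu).val = κ.getD ii.val 0 := by
      intro ii hu
      have hsp := Fintype.choose_spec (fun j : Fin ws.length => ii ∈ Finset.univ.filter
            (fun i' : Fin x.length => κ.getD i'.val 0 = j.val)) hu
      rw [Finset.mem_filter] at hsp
      exact hsp.2.symm
    have h2' : i < κ.length := by simpa using h2
    exact (this (Fin.cast (by simp) ⟨i, by simpa using h1⟩) _).trans
      (getD_eq_get_old _ _ h2')

/-- For nonempty words `w^1, …, w^n` over `{0,1}` (`n ≥ 1`), the coefficient of `δ_x` in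
`K(δ_{w^1}, …, δ_{w^n})` equals the number of good-shuffles realizing `x` from
`(w^1, …, w^n)`; in particular it vanishes unless `|x| = Σ_j |w^j|`. -/
theorem Klist_coeff_eq_card_goodShuffles (ws : List Word) (hne : ws ≠ [])
    (hw : ∀ w ∈ ws, w ≠ []) (x : Word) :
    (Klist (ws.map δ)) x
        = (Nat.card {S : Fin ws.length → Finset (Fin x.length) // GoodShuffle ws x S} : ℚ) ∧
    (x.length ≠ (ws.map List.length).sum → (Klist (ws.map δ)) x = 0) := by
  obtain ⟨w, ws', rfl⟩ : ∃ w ws', ws = w :: ws' := by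
    cases ws with
    | nil => exact absurd rfl hne
    | cons w ws' => exact ⟨w, ws', rfl⟩
  constructor
  · rw [Klist_apply]
    rw [Nat.card_congr (gsEquiv (w :: ws') x hw)]
    rw [cardGC w ws' hw x]
  · intro h
    rw [Klist_apply]
    have : gcount (w :: ws') x = 0 := by
      by_contra h0
      exact h (gcount_length _ _ h0)
    rw [this]
    simp
end

section
/- Let w be a word over {2,3} with k letters equal to 2 and ℓ letters equal to 3. Then the component of K_{u,v}(w) supported on words over {0,1} containing exactly k + 2ℓ letters 0 (the maximal possible number of 0's) equals u^ℓ · K_{1,0}(w). In particular, if u ≠ 0 this leading term is a nonzero multiple of K_{1,0}(w). -/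
lemma delta_support (x : Word) : (δ x).support = {x} :=
  Finsupp.support_single_ne_zero x one_ne_zero

lemma mem_support_shuffle : ∀ {x y z : Word},
    z ∈ (shuffle x y).support → ∀ b, z.count b = x.count b + y.count b := by
  intro x y
  induction x, y using shuffle.induct with
  | case1 y =>
    intro z hz b
    rw [shuffle, delta_support, Finset.mem_singleton] at hz
    subst hz; simp
  | case2 a x =>
    intro z hz b
    rw [shuffle, delta_support, Finset.mem_singleton] at hz
    subst hz; simp
  | case3 a x b y ih1 ih2 =>
    intro z hz c
    rw [shuffle] at hz
    rcases Finset.mem_union.mp (Finsupp.support_add hz) with h | h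
    · obtain ⟨s, hs, rfl⟩ := Finset.mem_image.mp (Finsupp.mapDomain_support h)
      have := ih1 hs c
      simp only [List.count_cons, this]
      omega
    · obtain ⟨s, hs, rfl⟩ := Finset.mem_image.mp (Finsupp.mapDomain_support h)
      have := ih2 hs c
      simp only [List.count_cons, this]
      omega

lemma mem_support_halfWord {x y z : Word} (h : z ∈ (halfWord x y).support) (b : Bool) :
    z.count b = x.count b + y.count b := by
  cases x with
  | nil => simp [halfWord] at h
  | cons a x =>
    rw [halfWord] at h
    obtain ⟨s, hs, rfl⟩ := Finset.mem_image.mp (Finsupp.mapDomain_support h)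
    have := mem_support_shuffle hs b
    simp only [List.count_cons, this]
    omega

lemma mem_support_half {f g : A01} {z : Word} (h : z ∈ (half f g).support) :
    ∃ x ∈ f.support, ∃ y ∈ g.support, z ∈ (halfWord x y).support := by
  rw [half] at h
  obtain ⟨x, hx, h⟩ := Finset.mem_biUnion.mp (Finsupp.support_sum h)
  obtain ⟨y, hy, h⟩ := Finset.mem_biUnion.mp (Finsupp.support_sum h)
  exact ⟨x, hx, y, hy, Finsupp.support_smul h⟩
lemma half_add_right (f g h : A01) : half f (g + h) = half f g + half f h := by
  unfold half
  rw [← Finsupp.sum_add]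
  congr 1; funext x c
  rw [Finsupp.sum_add_index' (by intro a; simp) (by intro a b₁ b₂; rw [mul_add, add_smul])]

lemma half_smul_right (a : ℚ) (f g : A01) : half f (a • g) = a • half f g := by
  unfold half
  rw [Finsupp.smul_sum]
  congr 1; funext x c
  rw [Finsupp.sum_smul_index' (by intro i; simp), Finsupp.smul_sum]
  congr 1; funext y d
  rw [smul_smul]; congr 1; simp only [smul_eq_mul]; ring

lemma half_add_left (f g h : A01) : half (f + g) h = half f h + half g h := by
  unfold half
  rw [Finsupp.sum_add_index' (by intro x; simp [Finsupp.sum]) (by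
    intro x b₁ b₂
    rw [← Finsupp.sum_add]
    congr 1; funext y d
    rw [add_mul, add_smul])]

lemma half_smul_left (a : ℚ) (f g : A01) : half (a • f) g = a • half f g := by
  unfold half
  rw [Finsupp.sum_smul_index' (by intro i; simp [Finsupp.sum]), Finsupp.smul_sum]
  congr 1; funext x c
  rw [Finsupp.smul_sum]
  congr 1; funext y d
  rw [smul_smul]; congr 1; simp only [smul_eq_mul]; ring

lemma half_delta_left (x : Word) (g : A01) :
    half (δ x) g = g.sum fun y d => d • halfWord x y := by
  unfold half δ
  rw [Finsupp.sum_single_index (by simp [Finsupp.sum])]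
  simp only [one_mul]
def maxZ (w : List Bool) : ℕ := w.count false + 2 * w.count true

lemma maxZ_cons (c : Bool) (w : List Bool) :
    maxZ (c :: w) = maxZ w + (if c then 2 else 1) := by
  cases c <;> simp [maxZ, List.count_cons] <;> omega

lemma countT_cons (c : Bool) (w : List Bool) :
    (c :: w).count true = w.count true + (if c then 1 else 0) := by
  cases c <;> simp [List.count_cons]

lemma zgen10 (c : Bool) : zgen 1 0 c = δ (if c then [true, false, false] else [true, false]) := by
  cases c <;> simp [zgen]

lemma Kuv_cons (u v : ℚ) (c d : Bool) (w : List Bool) :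
    Kuv u v (c :: d :: w) = half (zgen u v c) (Kuv u v (d :: w)) := rfl

lemma key (w : List Bool) (u v : ℚ) :
    (∀ z ∈ (Kuv 1 0 w).support, z.count false = maxZ w) ∧
    ∃ R : A01, Kuv u v w = u ^ (w.count true) • Kuv 1 0 w + R ∧
      ∀ z ∈ R.support, z.count false < maxZ w := by
  induction w with
  | nil =>
    refine ⟨?_, 0, by simp [Kuv, Klist], by simp⟩
    intro z hz
    rw [show Kuv 1 0 [] = δ [] from rfl, delta_support, Finset.mem_singleton] at hz
    subst hz; rfl
  | cons c w' ih =>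
    cases w' with
    | nil =>
      have hK : Kuv 1 0 [c] = δ (if c then [true, false, false] else [true, false]) := by
        rw [show Kuv 1 0 [c] = zgen 1 0 c from rfl, zgen10]
      constructor
      · intro z hz
        rw [hK, delta_support, Finset.mem_singleton] at hz
        subst hz
        cases c <;> simp [maxZ, List.count_cons]
      · cases c with
        | false =>
          refine ⟨0, ?_, by simp⟩
          rw [hK]
          simp [Kuv, Klist, zgen, List.map]
        | true =>
          refine ⟨v • δ [true, true, false], ?_, ?_⟩
          · rw [hK]
            show zgen u v true = _
            simp [zgen, List.count_cons, pow_one]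
          · intro z hz
            have hz' := Finsupp.support_smul hz
            rw [delta_support, Finset.mem_singleton] at hz'
            subst hz'
            simp [maxZ, List.count_cons]
    | cons d w'' =>
      obtain ⟨h1, R', hReq, hRlt⟩ := ih
      have hbound : ∀ z ∈ (Kuv u v (d :: w'')).support,
          z.count false ≤ maxZ (d :: w'') := by
        intro z hz
        rw [hReq] at hz
        rcases Finset.mem_union.mp (Finsupp.support_add hz) with h | h
        · exact le_of_eq (h1 z (Finsupp.support_smul h))
        · exact le_of_lt (hRlt z h)
      have hK10 : Kuv 1 0 (c :: d :: w'')
          = half (δ (if c then [true, false, false] else [true, false]))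
              (Kuv 1 0 (d :: w'')) := by
        rw [Kuv_cons, zgen10]
      have hmax : maxZ (c :: d :: w'') = maxZ (d :: w'') + (if c then 2 else 1) :=
        maxZ_cons c _
      constructor
      · intro z hz
        rw [hK10] at hz
        obtain ⟨x, hx, y, hy, hzw⟩ := mem_support_half hz
        rw [delta_support, Finset.mem_singleton] at hx
        subst hx
        have h2 := mem_support_halfWord hzw false
        have h3 := h1 y hy
        rw [hmax]
        cases c
        · try simp only [Bool.false_eq_true, reduceIte] at h2 ⊢
          have : List.count false [true, false] = 1 := by decide
          omega
        · try simp only [Bool.false_eq_true, reduceIte] at h2 ⊢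
          have : List.count false [true, false, false] = 2 := by decide
          omega
      · cases c with
        | false =>
          refine ⟨half (δ [true, false]) R', ?_, ?_⟩
          · have e0 : Kuv u v (false :: d :: w'')
                = half (δ [true, false]) (Kuv u v (d :: w'')) := rfl
            have hn : (false :: d :: w'').count true = (d :: w'').count true := by
              simp [List.count_cons]
            rw [e0, hReq, half_add_right, half_smul_right, hn, hK10]
            try simp only [Bool.false_eq_true, reduceIte]
          · intro z hz
            obtain ⟨x, hx, y, hy, hzw⟩ := mem_support_half hz
            rw [delta_support, Finset.mem_singleton] at hx
            subst hx
            have h2 := mem_support_halfWord hzw false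
            have h3 := hRlt y hy
            rw [hmax]
            try simp only [Bool.false_eq_true, reduceIte]
            have : List.count false [true, false] = 1 := by decide
            omega
        | true =>
          refine ⟨u • half (δ [true, false, false]) R'
              + v • half (δ [true, true, false]) (Kuv u v (d :: w'')), ?_, ?_⟩
          · have e0 : Kuv u v (true :: d :: w'')
                = half (u • δ [true, false, false] + v • δ [true, true, false])
                    (Kuv u v (d :: w'')) := rfl
            have hn : (true :: d :: w'').count true = (d :: w'').count true + 1 := by
              simp [List.count_cons]
            have e2 : half (δ [true, false, false]) (Kuv u v (d :: w''))
                = (u ^ (d :: w'').count true) • Kuv 1 0 (true :: d :: w'')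
                  + half (δ [true, false, false]) R' := by
              rw [hReq, half_add_right, half_smul_right, hK10]
              try simp only [Bool.false_eq_true, reduceIte]
            rw [e0, half_add_left, half_smul_left, half_smul_left, e2, smul_add,
              smul_smul, ← pow_succ', hn]
            abel
          · intro z hz
            rcases Finset.mem_union.mp (Finsupp.support_add hz) with h | h
            · obtain ⟨x, hx, y, hy, hzw⟩ := mem_support_half (Finsupp.support_smul h)
              rw [delta_support, Finset.mem_singleton] at hx
              subst hx
              have h2 := mem_support_halfWord hzw false
              have h3 := hRlt y hy
              rw [hmax]
              try simp only [Bool.false_eq_true, reduceIte]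
              have : List.count false [true, false, false] = 2 := by decide
              omega
            · obtain ⟨x, hx, y, hy, hzw⟩ := mem_support_half (Finsupp.support_smul h)
              rw [delta_support, Finset.mem_singleton] at hx
              subst hx
              have h2 := mem_support_halfWord hzw false
              have h3 := hbound y hy
              rw [hmax]
              try simp only [Bool.false_eq_true, reduceIte]
              have : List.count false [true, true, false] = 1 := by decide
              omega

/-- For a word `w` over `{2,3}` (with `k` letters `2` and `ℓ` letters `3`, encoded by
`false`/`true`), the component of `K_{u,v}(w)` supported on words with exactly `k + 2ℓ`
letters `0` equals `u^ℓ · K_{1,0}(w)`; if `u ≠ 0` this is a nonzero multiple of `K_{1,0}(w)`. -/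
theorem Kuv_leading_term_zeros (u v : ℚ) (w : List Bool) :
    Finsupp.filter
        (fun x : Word => x.count false = w.count false + 2 * w.count true)
        (Kuv u v w)
      = u ^ (w.count true) • Kuv 1 0 w ∧
    (u ≠ 0 → u ^ (w.count true) ≠ 0) := by
  obtain ⟨h1, R, hEq, hlt⟩ := key w u v
  refine ⟨?_, fun hu => pow_ne_zero _ hu⟩
  rw [hEq, Finsupp.filter_add, Finsupp.filter_smul]
  have hK : Finsupp.filter
      (fun x : Word => x.count false = w.count false + 2 * w.count true)
      (Kuv 1 0 w) = Kuv 1 0 w := by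
    ext a
    rw [Finsupp.filter_apply]
    split
    · rfl
    · next hp =>
      symm
      by_contra h
      exact hp (h1 a (Finsupp.mem_support_iff.mpr h))
  have hR : Finsupp.filter
      (fun x : Word => x.count false = w.count false + 2 * w.count true) R = 0 := by
    ext a
    rw [Finsupp.filter_apply]
    split
    · next hp =>
      by_contra h
      have := hlt a (Finsupp.mem_support_iff.mpr (by simpa using h))
      rw [maxZ] at this
      omega
    · rfl
  rw [hK, hR, add_zero]
end

section
/- Let w and w' be words over {2,3} of the same length n, with the same number of 2's and the same number of 3's, that agree in their first i letters. Then any good-shuffle (S_1, …, S_n) realizing cat₀(w') from the blocks (cat₀(w_1), …, cat₀(w_n)) is the identity on the common prefix: for every j ≤ i, S_j equals the set of consecutive positions occupied by the j-th block of cat₀(w'), namely the positions from |cat₀(w_1 ⋯ w_{j-1})| + 1 through |cat₀(w_1 ⋯ w_j)|. -/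
section Aux

lemma cat0_append (a b : List Bool) : cat0 (a ++ b) = cat0 a ++ cat0 b := by
  simp [cat0]

lemma cat0_take_succ (w' : List Bool) (j : ℕ) (hj : j < w'.length) :
    cat0 (w'.take (j + 1)) = cat0 (w'.take j) ++ blocks0 w'[j] := by
  rw [List.take_succ, cat0_append, List.getElem?_eq_getElem hj]
  simp [cat0]

lemma blocks0_length_pos (c : Bool) : 0 < (blocks0 c).length := by
  cases c <;> simp [blocks0]

lemma cat0_prefix {a b : List Bool} (h : a <+: b) : cat0 a <+: cat0 b := by
  obtain ⟨t, rfl⟩ := h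
  exact ⟨cat0 t, (cat0_append a t).symm⟩

lemma off_mono (w' : List Bool) {a b : ℕ} (h : a ≤ b) :
    (cat0 (w'.take a)).length ≤ (cat0 (w'.take b)).length := by
  refine List.IsPrefix.length_le (cat0_prefix ?_)
  exact ((List.take_take : (w'.take b).take a = w'.take (min a b)) ▸ (by rw [min_eq_left h]) : w'.take a = (w'.take b).take a) ▸
    List.take_prefix a (w'.take b)

lemma off_le_total (w' : List Bool) (a : ℕ) :
    (cat0 (w'.take a)).length ≤ (cat0 w').length :=
  List.IsPrefix.length_le (cat0_prefix (List.take_prefix a w'))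

lemma off_succ (w' : List Bool) (j : ℕ) (hj : j < w'.length) :
    (cat0 (w'.take (j + 1))).length
      = (cat0 (w'.take j)).length + (blocks0 w'[j]).length := by
  rw [cat0_take_succ w' j hj, List.length_append]

lemma off_lt (w' : List Bool) (j : ℕ) (hj : j < w'.length) :
    (cat0 (w'.take j)).length < (cat0 (w'.take (j + 1))).length := by
  rw [off_succ w' j hj]
  exact Nat.lt_add_of_pos_right (blocks0_length_pos _)

lemma off_length (w' : List Bool) :
    (cat0 (w'.take w'.length)).length = (cat0 w').length := by
  rw [List.take_length]

lemma exists_block (w' : List Bool) (n p : ℕ) (hp : p < (cat0 (w'.take n)).length) :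
    ∃ j < n, (cat0 (w'.take j)).length ≤ p ∧ p < (cat0 (w'.take (j + 1))).length := by
  induction n with
  | zero => simp [cat0] at hp
  | succ n ih =>
    by_cases h : p < (cat0 (w'.take n)).length
    · obtain ⟨j, hj, h1, h2⟩ := ih h
      exact ⟨j, Nat.lt_succ_of_lt hj, h1, h2⟩
    · exact ⟨n, Nat.lt_succ_self n, Nat.le_of_not_lt h, hp⟩

lemma cat0_getElem (w' : List Bool) (j : ℕ) (hj : j < w'.length) (m : ℕ)
    (hm : m < (blocks0 w'[j]).length)
    (hp : (cat0 (w'.take j)).length + m < (cat0 w').length) :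
    (cat0 w')[(cat0 (w'.take j)).length + m] = (blocks0 w'[j])[m] := by
  have hsplit : cat0 w' = (cat0 (w'.take j) ++ blocks0 w'[j]) ++ cat0 (w'.drop (j + 1)) := by
    rw [← cat0_take_succ w' j hj, ← cat0_append, List.take_append_drop]
  have h1 : (cat0 (w'.take j)).length + m
      < (cat0 (w'.take j) ++ blocks0 w'[j]).length := by
    rw [List.length_append]; omega
  simp only [hsplit]
  rw [List.getElem_append_left h1, List.getElem_append_right (Nat.le_add_right _ _)]
  simp

lemma blocks0_getElem_zero (c : Bool) : (blocks0 c)[0]'(blocks0_length_pos c) = true := by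
  cases c <;> rfl

lemma blocks0_getElem_pos (c : Bool) (m : ℕ) (h1 : 1 ≤ m) (hm : m < (blocks0 c).length) :
    (blocks0 c)[m] = false := by
  cases c <;> simp [blocks0] at hm ⊢ <;> interval_cases m <;> rfl

end Aux

/-- Any good-shuffle realizing `cat₀(w')` from the blocks of `cat₀(w)` is the identity on a
common prefix of `w` and `w'` (words over `{2,3}` of the same length with the same numbers
of `2`'s and `3`'s): for `j` in the prefix, `S j` is the interval of positions of the
`j`-th block of `cat₀(w')`. -/
theorem goodShuffle_identity_on_prefix_cat0 (w w' : List Bool)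
    (hlen : w.length = w'.length)
    (h2 : w.count false = w'.count false) (h3 : w.count true = w'.count true)
    (i : ℕ) (hpre : w.take i = w'.take i)
    (S : Fin (w.map blocks0).length → Finset (Fin (cat0 w').length))
    (hS : GoodShuffle (w.map blocks0) (cat0 w') S)
    (j : Fin (w.map blocks0).length) (hj : (j : ℕ) < i) :
    S j = Finset.univ.filter (fun p : Fin (cat0 w').length =>
        (cat0 (w'.take (j : ℕ))).length ≤ (p : ℕ) ∧
        (p : ℕ) < (cat0 (w'.take ((j : ℕ) + 1))).length) := by
  obtain ⟨hpart, hread, hmin⟩ := hS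
  have hlenS : (w.map blocks0).length = w.length := List.length_map _
  -- letters agree on the prefix
  have hww' : ∀ m, m < i → ∀ (hmw : m < w.length), w[m] = w'[m]'(hlen ▸ hmw) := by
    intro m hm hmw
    have h1 : (w.take i)[m]'(by simp [hmw, hm]) = w[m] := List.getElem_take ..
    have h2 : (w'.take i)[m]'(by rw [hpre] at *; simpa using ⟨hm, hlen ▸ hmw⟩)
        = w'[m]'(hlen ▸ hmw) := List.getElem_take ..
    rw [← h1, ← h2]
    exact List.getElem_of_eq hpre _
  -- cardinalities of the parts
  have hcard : ∀ k : Fin (w.map blocks0).length,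
      (S k).card = (blocks0 (w[(k : ℕ)]'(hlenS ▸ k.isLt))).length := by
    intro k
    have h := congrArg List.length (hread k)
    simpa [Finset.length_sort, List.get_eq_getElem, List.getElem_map] using h
  have hne : ∀ k : Fin (w.map blocks0).length, (S k).Nonempty := by
    intro k
    rw [← Finset.card_pos, hcard k]
    exact blocks0_length_pos _
  -- the minimum of each part reads `true`
  have hmt : ∀ k : Fin (w.map blocks0).length,
      (cat0 w').get ((S k).min' (hne k)) = true := by
    intro k
    have h := hread k
    have h0 : 0 < ((S k).sort (· ≤ ·)).length := by
      rw [Finset.length_sort]; exact (hne k).card_pos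
    have h0m : 0 < (((S k).sort (· ≤ ·)).map (cat0 w').get).length := by simpa using h0
    have e2 : (((S k).sort (· ≤ ·)).map (cat0 w').get)[0]'h0m = true := by
      rw [List.getElem_of_eq h]
      simp [List.get_eq_getElem, List.getElem_map, blocks0_getElem_zero]
    rw [List.getElem_map, Finset.sorted_zero_eq_min'] at e2
    exact e2
  -- strict ordering of the minima
  have hmin' : ∀ k1 k2 : Fin (w.map blocks0).length, k1 < k2 →
      (S k1).min' (hne k1) < (S k2).min' (hne k2) := by
    intro k1 k2 h
    have := hmin k1 k2 h
    rw [← Finset.coe_min' (hne k1), ← Finset.coe_min' (hne k2)] at this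
    exact_mod_cast this
  -- main induction
  have key : ∀ j0 : ℕ, j0 < i → ∀ hj0 : j0 < (w.map blocks0).length,
      S ⟨j0, hj0⟩ = Finset.univ.filter (fun p : Fin (cat0 w').length =>
        (cat0 (w'.take j0)).length ≤ (p : ℕ) ∧
        (p : ℕ) < (cat0 (w'.take (j0 + 1))).length) := by
    intro j0
    induction j0 using Nat.strong_induction_on with
    | _ j0 IH =>
      intro hji hj0
      have hj0w : j0 < w.length := hlenS ▸ hj0
      have hj0w' : j0 < w'.length := hlen ▸ hj0w
      have hc : w[j0] = w'[j0] := hww' j0 hji hj0w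
      set jf : Fin (w.map blocks0).length := ⟨j0, hj0⟩ with hjf
      set len := (blocks0 w'[j0]).length with hlendef
      have hoff1 : (cat0 (w'.take (j0 + 1))).length = (cat0 (w'.take j0)).length + len :=
        off_succ w' j0 hj0w'
      have hle_x : (cat0 (w'.take (j0 + 1))).length ≤ (cat0 w').length := off_le_total w' _
      -- no part with index ≥ j0 contains a position before the j0-th block
      have notmem : ∀ k : Fin (w.map blocks0).length, j0 ≤ (k : ℕ) →
          ∀ p ∈ S k, (cat0 (w'.take j0)).length ≤ (p : ℕ) := by
        intro k hk p hp
        by_contra hcon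
        push_neg at hcon
        obtain ⟨j', hj'lt, h1, h2⟩ := exists_block w' j0 (p : ℕ) hcon
        have hj'0 : j' < (w.map blocks0).length := by omega
        have hpj' : p ∈ S ⟨j', hj'0⟩ := by
          rw [IH j' hj'lt (by omega) hj'0]
          simp only [Finset.mem_filter, Finset.mem_univ, true_and]
          exact ⟨h1, h2⟩
        obtain ⟨u, hu, huq⟩ := hpart p
        have e1 := huq k hp
        have e2 := huq ⟨j', hj'0⟩ hpj'
        rw [← e2] at e1
        have : (k : ℕ) = j' := by rw [e1]
        omega
      -- the start of the j0-th block belongs to S jf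
      have hoffjlt : (cat0 (w'.take j0)).length < (cat0 w').length :=
        lt_of_lt_of_le (off_lt w' j0 hj0w') hle_x
      set pj : Fin (cat0 w').length := ⟨(cat0 (w'.take j0)).length, hoffjlt⟩ with hpj
      have hidx : ∀ (q : Fin (cat0 w').length), (cat0 (w'.take j0)).length ≤ (q : ℕ) →
          (q : ℕ) < (cat0 (w'.take (j0 + 1))).length →
          ∀ k : Fin (w.map blocks0).length, q ∈ S k → j0 ≤ (k : ℕ) := by
        intro q hq1 hq2 k hk
        by_contra hcon
        push_neg at hcon
        rw [IH (k : ℕ) hcon (by omega) k.isLt] at hk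
        simp only [Finset.mem_filter, Finset.mem_univ, true_and] at hk
        have : (cat0 (w'.take ((k : ℕ) + 1))).length ≤ (cat0 (w'.take j0)).length :=
          off_mono w' (by omega)
        omega
      have hmemj : pj ∈ S jf := by
        obtain ⟨k, hk, hku⟩ := hpart pj
        have hjk : j0 ≤ (k : ℕ) :=
          hidx pj le_rfl (show (cat0 (w'.take j0)).length < _ from off_lt w' j0 hj0w') k hk
        rcases eq_or_lt_of_le hjk with heq | hlt
        · have : k = jf := Fin.ext heq.symm
          rwa [this] at hk
        · exfalso
          have h1 := hmin' jf k (by rw [hjf]; exact hlt)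
          have h2 : ((S k).min' (hne k) : ℕ) ≤ (cat0 (w'.take j0)).length :=
            Finset.min'_le (S k) pj hk
          have h3 : (cat0 (w'.take j0)).length ≤ (((S jf).min' (hne jf)) : ℕ) :=
            notmem jf le_rfl _ (Finset.min'_mem _ _)
          have h4 : (((S jf).min' (hne jf)) : ℕ) < (((S k).min' (hne k)) : ℕ) := h1
          omega
      have hminval : (((S jf).min' (hne jf)) : ℕ) = (cat0 (w'.take j0)).length := by
        have h2 : ((S jf).min' (hne jf) : ℕ) ≤ (cat0 (w'.take j0)).length :=
          Finset.min'_le (S jf) pj hmemj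
        have h3 : (cat0 (w'.take j0)).length ≤ (((S jf).min' (hne jf)) : ℕ) :=
          notmem jf le_rfl _ (Finset.min'_mem _ _)
        omega
      -- every position of the j0-th block belongs to S jf
      have hmem_m : ∀ m, (hm : m < len) → (⟨(cat0 (w'.take j0)).length + m,
          by omega⟩ : Fin (cat0 w').length) ∈ S jf := by
        intro m hm
        rcases Nat.eq_zero_or_pos m with rfl | hm1
        · simpa using hmemj
        set q : Fin (cat0 w').length := ⟨(cat0 (w'.take j0)).length + m, by omega⟩ with hq
        obtain ⟨k, hk, hku⟩ := hpart q
        have hjk : j0 ≤ (k : ℕ) := hidx q (Nat.le_add_right _ _)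
          (show (cat0 (w'.take j0)).length + m < _ by omega) k hk
        -- min of S k is in [off j0, off j0 + m] and reads true, hence equals off j0
        have h2 : ((S k).min' (hne k) : ℕ) ≤ (cat0 (w'.take j0)).length + m :=
          Finset.min'_le (S k) q hk
        have h3 : (cat0 (w'.take j0)).length ≤ (((S k).min' (hne k)) : ℕ) :=
          notmem k hjk _ (Finset.min'_mem _ _)
        have h4 := hmt k
        have h5 : (((S k).min' (hne k)) : ℕ) = (cat0 (w'.take j0)).length := by
          by_contra hcon
          set m' := (((S k).min' (hne k)) : ℕ) - (cat0 (w'.take j0)).length with hm'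
          have hm'1 : 1 ≤ m' := by omega
          have hm'2 : m' < len := by omega
          have hval : (((S k).min' (hne k)) : ℕ) = (cat0 (w'.take j0)).length + m' := by omega
          have hfalse : (cat0 w')[(cat0 (w'.take j0)).length + m'] = false := by
            rw [cat0_getElem w' j0 hj0w' m' hm'2 (by omega)]
            exact blocks0_getElem_pos _ m' hm'1 hm'2
          rw [List.get_eq_getElem] at h4
          simp only [hval] at h4
          rw [hfalse] at h4
          exact Bool.false_ne_true h4
        have hkj : k = jf := by
          by_contra hcon
          rcases lt_or_gt_of_ne hcon with hlt | hlt
          · have := hmin' k jf hlt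
            have : (((S k).min' (hne k)) : ℕ) < (((S jf).min' (hne jf)) : ℕ) := this
            omega
          · have := hmin' jf k hlt
            have : (((S jf).min' (hne jf)) : ℕ) < (((S k).min' (hne k)) : ℕ) := this
            omega
        rw [hkj] at hk
        exact hk
      -- conclude by a cardinality argument
      set E : Finset (Fin (cat0 w').length) :=
        (Finset.range len).attach.image
          (fun m => (⟨(cat0 (w'.take j0)).length + m.1,
            by have := Finset.mem_range.mp m.2; omega⟩ : Fin (cat0 w').length)) with hE
      have hEsub : E ⊆ S jf := by
        intro p hp
        simp only [hE, Finset.mem_image, Finset.mem_attach, true_and] at hp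
        obtain ⟨m, hm⟩ := hp
        rw [← hm]
        exact hmem_m m.1 (Finset.mem_range.mp m.2)
      have hEcard : E.card = len := by
        rw [hE, Finset.card_image_of_injective, Finset.card_attach, Finset.card_range]
        intro a b hab
        apply Subtype.ext
        have := Fin.mk.injEq .. ▸ hab
        have : (cat0 (w'.take j0)).length + a.1 = (cat0 (w'.take j0)).length + b.1 :=
          congrArg Fin.val hab
        omega
      have hScard : (S jf).card = len := by
        rw [hcard jf]
        simp only [hjf]
        rw [hc]
      have hES : E = S jf := Finset.eq_of_subset_of_card_le hEsub (by rw [hEcard, hScard])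
      rw [← hES]
      ext p
      simp only [hE, Finset.mem_image, Finset.mem_attach, true_and, Finset.mem_filter,
        Finset.mem_univ, hoff1]
      constructor
      · rintro ⟨m, rfl⟩
        have := Finset.mem_range.mp m.2
        simp only []
        omega
      · rintro ⟨h1, h2⟩
        refine ⟨⟨(p : ℕ) - (cat0 (w'.take j0)).length, Finset.mem_range.mpr (by omega)⟩, ?_⟩
        apply Fin.ext
        simp only []
        omega
  have := key (j : ℕ) hj j.isLt
  simpa using this
end
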